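/- Every continuous K-valued character σ of ℤ_p^× is analytic: for every z ∈ U, the function σ (viewed as a function on the open subset U of ℚ_p with values in K) is analytic at z. -/

import Mathlib

open NormedSpace Nat Filter

/-- The exponential power series over a normed `ℚ_[p]`-algebra has radius at least `p⁻²`. -/
private lemma padic_expSeries_radius (p : ℕ) [hp : Fact p.Prime] (A : Type*)
    [NormedCommRing A] [NormOneClass A] [NormedAlgebra ℚ_[p] A] :
    (((p : NNReal)⁻¹ ^ 2 : NNReal) : ENNReal) ≤ (expSeries ℚ_[p] A).radius := by
  apply FormalMultilinearSeries.le_radius_of_bound _ 1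
  intro n
  have hp1 : (1:ℝ) < p := by exact_mod_cast hp.out.one_lt
  have hp0 : (0:ℝ) < p := lt_trans one_pos hp1
  have hv : (padicValNat p (n !) : ℤ) ≤ (n : ℤ) := by
    have h1 := sub_one_mul_padicValNat_factorial (p := p) n
    have h2 : padicValNat p (n !) ≤ (p-1) * padicValNat p (n !) :=
      Nat.le_mul_of_pos_left _ (by have := hp.out.two_le; omega)
    have : padicValNat p (n !) ≤ n := by omega
    exact_mod_cast this
  have hfact : (n ! : ℚ_[p]) ≠ 0 := by
    exact_mod_cast Nat.cast_ne_zero.mpr (Nat.factorial_ne_zero n)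
  have hnorm : ‖(n ! : ℚ_[p])‖ = (p:ℝ) ^ (-((padicValNat p (n !)) : ℤ)) := by
    rw [Padic.norm_eq_zpow_neg_valuation hfact, Padic.valuation_natCast]
  have hns : ‖expSeries ℚ_[p] A n‖ = ‖(n ! : ℚ_[p])‖⁻¹ := by
    show ‖((n !: ℚ_[p]))⁻¹ • ContinuousMultilinearMap.mkPiAlgebraFin ℚ_[p] n A‖ = _
    rw [norm_smul ((n ! : ℚ_[p]))⁻¹ (ContinuousMultilinearMap.mkPiAlgebraFin ℚ_[p] n A),
      ContinuousMultilinearMap.norm_mkPiAlgebraFin, mul_one, norm_inv]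
  have hcoe : (((p : NNReal)⁻¹ ^ 2 : NNReal) : ℝ) = ((p:ℝ)⁻¹) ^ 2 := by push_cast; ring
  rw [hns, hnorm, hcoe]
  have e1 : ((p:ℝ) ^ (-((padicValNat p (n !)) : ℤ)))⁻¹ = (p:ℝ) ^ ((padicValNat p (n !)) : ℤ) := by
    rw [← zpow_neg, neg_neg]
  rw [e1]
  have e2 : (((p:ℝ)⁻¹) ^ 2) ^ n = (p:ℝ) ^ (-(2 * n : ℤ)) := by
    rw [← pow_mul, inv_pow, ← zpow_natCast, ← zpow_neg]
    push_cast; ring_nf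
  rw [e2, ← zpow_add₀ hp0.ne']
  calc (p:ℝ) ^ ((padicValNat p (n !) : ℤ) + -(2 * n : ℤ)) ≤ (p:ℝ) ^ (0:ℤ) := by
        apply zpow_le_zpow_right₀ hp1.le
        omega
    _ = 1 := by norm_num

/-- Membership in the ball of convergence of the exponential series. -/
private lemma padic_mem_expBall (p : ℕ) [hp : Fact p.Prime] {A : Type*}
    [NormedCommRing A] [NormOneClass A] [NormedAlgebra ℚ_[p] A] {x : A}
    (hx : ‖x‖ < ((p:ℝ)⁻¹)^2) : x ∈ Metric.eball (0:A) (expSeries ℚ_[p] A).radius := by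
  rw [mem_eball_zero_iff]
  refine lt_of_lt_of_le ?_ (padic_expSeries_radius p A)
  rw [enorm_eq_nnnorm, ENNReal.coe_lt_coe, ← NNReal.coe_lt_coe]
  push_cast
  exact hx

/-- The unit sphere of `ℚ_[p]` is stable under perturbations of norm `< 1`. -/
private lemma qnorm_one_of_near (p : ℕ) [hp : Fact p.Prime] (z w : ℚ_[p])
    (hz : ‖z‖ = 1) (h : ‖w - z‖ < 1) : ‖w‖ = 1 := by
  have hub : ‖w‖ ≤ 1 := by
    calc ‖w‖ = ‖(w - z) + z‖ := by ring_nf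
      _ ≤ max ‖w - z‖ ‖z‖ := Padic.nonarchimedean _ _
      _ ≤ 1 := max_le h.le hz.le
  have hle : ‖z‖ ≤ max ‖w‖ ‖w - z‖ := by
    calc ‖z‖ = ‖w + -(w - z)‖ := by ring_nf
      _ ≤ max ‖w‖ ‖-(w - z)‖ := Padic.nonarchimedean _ _
      _ = max ‖w‖ ‖w - z‖ := by rw [norm_neg]
  have hlb : (1:ℝ) ≤ ‖w‖ := by
    by_contra hc
    push_neg at hc
    rw [hz] at hle
    exact absurd hle (not_le.mpr (max_lt hc h))
  linarith

/-- The exponential has an analytic local right inverse at `1`. -/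
private lemma padic_exp_localInverse (p : ℕ) [hp : Fact p.Prime] (A : Type*)
    [NontriviallyNormedField A] [NormedAlgebra ℚ_[p] A] [CompleteSpace A]
    (hrad : 0 < (expSeries ℚ_[p] A).radius) :
    ∃ L : A → A, AnalyticAt ℚ_[p] L 1 ∧ L 1 = 0 ∧
      (∀ᶠ y in nhds (1 : A), exp (L y) = y) := by
  have hsd0 : HasStrictFDerivAt (exp) (1 : A →L[ℚ_[p]] A) 0 :=
    hasStrictFDerivAt_exp_zero_of_radius_pos hrad
  have hsd : HasStrictFDerivAt (exp)
      ((ContinuousLinearEquiv.refl ℚ_[p] A : A →L[ℚ_[p]] A)) 0 := by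
    rwa [ContinuousLinearEquiv.coe_refl, ← ContinuousLinearMap.one_def]
  have hexp0 : exp (0 : A) = 1 := exp_zero
  refine ⟨(hsd.toOpenPartialHomeomorph (exp)).symm, ?_, ?_, ?_⟩
  · have hps : HasFPowerSeriesAt ((hsd.toOpenPartialHomeomorph (exp)) : A → A)
        (expSeries ℚ_[p] A) 0 := hasFPowerSeriesAt_exp_zero_of_radius_pos hrad
    have hcoeff : expSeries ℚ_[p] A 1 =
        (continuousMultilinearCurryFin1 ℚ_[p] A A).symm
          ((ContinuousLinearEquiv.refl ℚ_[p] A : A →L[ℚ_[p]] A)) := by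
      ext v
      have hv : v = fun _ => v 0 := funext fun i => by fin_cases i; rfl
      rw [hv]
      simp [expSeries_apply_eq]
    have h := (hsd.toOpenPartialHomeomorph (exp)).hasFPowerSeriesAt_symm
      hsd.mem_toOpenPartialHomeomorph_source hps hcoeff
    have h0 : ((hsd.toOpenPartialHomeomorph (exp)) : A → A) 0 = 1 := hexp0
    rw [h0] at h
    exact h.analyticAt
  · have h := hsd.localInverse_apply_image
    rwa [hexp0] at h
  · have h := hsd.eventually_right_inverse
    rwa [hexp0] at h

/-- **Every continuous `K`-valued character of `ℤ_p^×` is analytic**: identifying `ℤ_p^×`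
with the open set `U = {z ∈ ℚ_p : ‖z‖ = 1}`, if `σ : U → K` is continuous, `σ 1 = 1`, and
`σ (xy) = σ x · σ y` for all `x, y ∈ U`, then `σ` is analytic at every `z ∈ U`. -/
theorem continuous_character_analytic
    (p : ℕ) [Fact p.Prime] (K : Type*) [NontriviallyNormedField K]
    [NormedAlgebra ℚ_[p] K] [CompleteSpace K] [IsUltrametricDist K]
    (σ : ℚ_[p] → K)
    (hcont : ContinuousOn σ {z : ℚ_[p] | ‖z‖ = 1})
    (hone : σ 1 = 1)
    (hmul : ∀ x ∈ {z : ℚ_[p] | ‖z‖ = 1}, ∀ y ∈ {z : ℚ_[p] | ‖z‖ = 1},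
      σ (x * y) = σ x * σ y) :
    ∀ z ∈ {z : ℚ_[p] | ‖z‖ = 1}, AnalyticAt ℚ_[p] σ z := by
  have hprime : p.Prime := Fact.out
  intro z hz
  simp only [Set.mem_setOf_eq] at hz
  have hU1 : (1:ℚ_[p]) ∈ {z : ℚ_[p] | ‖z‖ = 1} := by simp
  have hUopen : IsOpen {z : ℚ_[p] | ‖z‖ = 1} := by
    rw [Metric.isOpen_iff]
    intro x hx
    refine ⟨1, one_pos, fun w hw => qnorm_one_of_near p x w hx ?_⟩
    rwa [Metric.mem_ball, dist_eq_norm] at hw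
  -- Reduce to proving analyticity at 1
  suffices h1 : AnalyticAt ℚ_[p] σ 1 by
    have hz0 : z ≠ 0 := by
      intro h; rw [h] at hz; simp at hz
    have hinner : AnalyticAt ℚ_[p] (fun w : ℚ_[p] => w * z⁻¹) z :=
      (analyticAt_id).mul analyticAt_const
    have hσ1 : AnalyticAt ℚ_[p] σ (z * z⁻¹) := by
      rw [mul_inv_cancel₀ hz0]; exact h1
    have hcomp : AnalyticAt ℚ_[p] (σ ∘ fun w : ℚ_[p] => w * z⁻¹) z := hσ1.comp_of_eq hinner rfl
    have hφ : AnalyticAt ℚ_[p] (fun w => σ z * σ (w * z⁻¹)) z :=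
      analyticAt_const.mul hcomp
    refine hφ.congr ?_
    filter_upwards [Metric.ball_mem_nhds z one_pos] with w hw
    rw [Metric.mem_ball, dist_eq_norm] at hw
    have hwU : ‖w‖ = 1 := qnorm_one_of_near p z w hz hw
    have hmem : w * z⁻¹ ∈ {z : ℚ_[p] | ‖z‖ = 1} := by
      simp only [Set.mem_setOf_eq, norm_mul, norm_inv, hwU, hz]; norm_num
    have hkey : σ (z * (w * z⁻¹)) = σ z * σ (w * z⁻¹) := hmul z hz (w * z⁻¹) hmem
    calc σ z * σ (w * z⁻¹) = σ (z * (w * z⁻¹)) := hkey.symm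
      _ = σ w := by rw [show z * (w * z⁻¹) = w by field_simp]
  -- Now prove analyticity at 1
  set ρ : ℝ := ((p:ℝ)⁻¹)^2 with hρdef
  have hp1 : (1:ℝ) < p := by exact_mod_cast hprime.one_lt
  have hppos : (0:ℝ) < p := lt_trans one_pos hp1
  have hρpos : 0 < ρ := by positivity
  have hnnpos : (0:NNReal) < (p : NNReal)⁻¹ ^ 2 := by
    have : (0:NNReal) < (p : NNReal) := by exact_mod_cast hprime.pos
    positivity
  have hradQ : 0 < (expSeries ℚ_[p] ℚ_[p]).radius :=
    lt_of_lt_of_le (ENNReal.coe_pos.mpr hnnpos) (padic_expSeries_radius p ℚ_[p])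
  have hradK : 0 < (expSeries ℚ_[p] K).radius :=
    lt_of_lt_of_le (ENNReal.coe_pos.mpr hnnpos) (padic_expSeries_radius p K)
  obtain ⟨LQ, hLQa, hLQ1, hLQr⟩ := padic_exp_localInverse p ℚ_[p] hradQ
  obtain ⟨LK, hLKa, hLK1, hLKr⟩ := padic_exp_localInverse p K hradK
  -- A good neighborhood V of 1 in K
  have hVev : ∀ᶠ y in nhds (1:K), exp (LK y) = y ∧ ‖LK y‖ < ρ := by
    refine hLKr.and ?_
    have hc : Tendsto LK (nhds 1) (nhds 0) := by
      rw [← hLK1]; exact hLKa.continuousAt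
    have := hc.eventually (eventually_mem_set.mpr (Metric.ball_mem_nhds (0:K) hρpos))
    filter_upwards [this] with y hy
    rwa [Metric.mem_ball, _root_.dist_zero_right] at hy
  obtain ⟨V, hVmem, hV⟩ := hVev.exists_mem
  -- continuity data at 0/1
  have hEQc : ContinuousAt (exp : ℚ_[p] → ℚ_[p]) 0 :=
    (analyticAt_exp_of_mem_ball (0:ℚ_[p]) (Metric.mem_eball_self hradQ)).continuousAt
  have hexpQzero : exp (0:ℚ_[p]) = 1 := exp_zero
  have hσ1c : ContinuousAt σ 1 := hcont.continuousAt (hUopen.mem_nhds hU1)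
  have hσE : ContinuousAt (fun s : ℚ_[p] => σ (exp s)) 0 := by
    refine ContinuousAt.comp ?_ hEQc
    rw [hexpQzero]; exact hσ1c
  -- the eventual property near 0 in ℚ_[p]
  have hW : ∀ᶠ s : ℚ_[p] in nhds 0,
      ‖s‖ < ρ ∧ ‖exp s - 1‖ < 1 ∧ σ (exp s) ∈ V := by
    refine Filter.Eventually.and ?_ (Filter.Eventually.and ?_ ?_)
    · filter_upwards [Metric.ball_mem_nhds (0:ℚ_[p]) hρpos] with s hs
      rwa [Metric.mem_ball, _root_.dist_zero_right] at hs
    · have h1 : Tendsto (exp : ℚ_[p] → ℚ_[p]) (nhds 0) (nhds 1) := by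
        rw [← hexpQzero]; exact hEQc
      have := h1.eventually (eventually_mem_set.mpr (Metric.ball_mem_nhds (1:ℚ_[p]) one_pos))
      filter_upwards [this] with s hs
      rwa [Metric.mem_ball, dist_eq_norm] at hs
    · have h2 : Tendsto (fun s : ℚ_[p] => σ (exp s)) (nhds 0) (nhds 1) := by
        have : σ (exp (0:ℚ_[p])) = 1 := by rw [hexpQzero, hone]
        rw [← this]; exact hσE
      exact h2.eventually (eventually_mem_set.mpr hVmem)
  obtain ⟨δ, hδpos, hδ⟩ := Metric.eventually_nhds_iff_ball.mp hW
  obtain ⟨m, hm⟩ := exists_pow_lt_of_lt_one hδpos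
    (by rw [inv_lt_one_iff₀]; right; exact hp1)
  set ε : ℝ := ((p:ℝ)⁻¹)^m with hεdef
  set s₀ : ℚ_[p] := ((p:ℚ_[p]))^m with hs₀def
  have hs₀norm : ‖s₀‖ = ε := by
    rw [hs₀def, norm_pow, Padic.norm_p]
  have hs₀ne : s₀ ≠ 0 := by
    apply pow_ne_zero
    exact_mod_cast hprime.ne_zero
  have hεpos : 0 < ε := by positivity
  have hWs : ∀ s : ℚ_[p], ‖s‖ ≤ ε →
      (‖s‖ < ρ ∧ ‖exp s - 1‖ < 1 ∧ σ (exp s) ∈ V) := by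
    intro s hs
    apply hδ
    rw [Metric.mem_ball, _root_.dist_zero_right]
    exact lt_of_le_of_lt hs hm
  have hexpU : ∀ s : ℚ_[p], ‖s‖ ≤ ε → ‖exp s‖ = 1 := fun s hs =>
    qnorm_one_of_near p 1 (exp s) norm_one (hWs s hs).2.1
  -- the constant c
  have hs₀ε : ‖s₀‖ ≤ ε := le_of_eq hs₀norm
  set c : K := LK (σ (exp s₀)) with hcdef
  obtain ⟨hc_exp, hc_norm⟩ := hV _ (hWs s₀ hs₀ε).2.2
  -- norms of integers
  have hnatnorm : ∀ n : ℕ, ‖(n:ℚ_[p])‖ ≤ 1 := fun n => by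
    exact_mod_cast Padic.norm_int_le_one (n:ℤ)
  have hZnorm : ∀ a : ℤ_[p], ‖(a:ℚ_[p])‖ ≤ 1 := fun a => by
    rw [← PadicInt.norm_def]; exact PadicInt.norm_le_one a
  -- continuity of the two functions on ℤ_[p]
  have hcoeZ : Continuous ((↑) : ℤ_[p] → ℚ_[p]) := continuous_subtype_val
  have hF₁ : Continuous (fun a : ℤ_[p] => σ (exp ((a:ℚ_[p]) * s₀))) := by
    have hmapsto : ∀ a : ℤ_[p], ((a:ℚ_[p]) * s₀) ∈ Metric.closedBall (0:ℚ_[p]) ε := by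
      intro a
      rw [Metric.mem_closedBall, _root_.dist_zero_right, norm_mul, hs₀norm]
      exact mul_le_of_le_one_left hεpos.le (hZnorm a)
    have hEQball : ContinuousOn (exp : ℚ_[p] → ℚ_[p]) (Metric.closedBall 0 ε) := by
      apply (continuousOn_exp (𝕂 := ℚ_[p]) (𝔸 := ℚ_[p])).mono
      intro s hs
      rw [Metric.mem_closedBall, _root_.dist_zero_right] at hs
      exact padic_mem_expBall p (hWs s hs).1
    have hcomp : ContinuousOn (fun s : ℚ_[p] => σ (exp s)) (Metric.closedBall 0 ε) := by
      refine ContinuousOn.comp hcont hEQball ?_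
      intro s hs
      rw [Metric.mem_closedBall, _root_.dist_zero_right] at hs
      exact hexpU s hs
    exact hcomp.comp_continuous (hcoeZ.mul continuous_const) hmapsto
  have hF₂ : Continuous (fun a : ℤ_[p] => exp ((a:ℚ_[p]) • c)) := by
    have hmapsto : ∀ a : ℤ_[p],
        ((a:ℚ_[p]) • c) ∈ Metric.eball (0:K) (expSeries ℚ_[p] K).radius := by
      intro a
      apply padic_mem_expBall p
      rw [norm_smul]
      exact lt_of_le_of_lt (mul_le_of_le_one_left (norm_nonneg c) (hZnorm a)) hc_norm
    exact (continuousOn_exp (𝕂 := ℚ_[p]) (𝔸 := K)).comp_continuous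
      (hcoeZ.smul continuous_const) hmapsto
  -- agreement on ℕ
  have clm1 : ∀ n : ℕ, σ (exp ((n:ℚ_[p]) * s₀)) = (σ (exp s₀))^n := by
    intro n
    induction n with
    | zero => simp [hexpQzero, hone]
    | succ n ih =>
      have hns : ‖(n:ℚ_[p]) * s₀‖ ≤ ε := by
        rw [norm_mul, hs₀norm]
        exact mul_le_of_le_one_left hεpos.le (hnatnorm n)
      have hmem1 : (n:ℚ_[p]) * s₀ ∈ Metric.eball (0:ℚ_[p]) (expSeries ℚ_[p] ℚ_[p]).radius :=
        padic_mem_expBall p (hWs _ hns).1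
      have hmem2 : s₀ ∈ Metric.eball (0:ℚ_[p]) (expSeries ℚ_[p] ℚ_[p]).radius :=
        padic_mem_expBall p (hWs _ hs₀ε).1
      have hsplit : ((n+1:ℕ):ℚ_[p]) * s₀ = (n:ℚ_[p]) * s₀ + s₀ := by push_cast; ring
      rw [hsplit, exp_add_of_mem_ball hmem1 hmem2,
        hmul _ (hexpU _ hns) _ (hexpU _ hs₀ε), ih, pow_succ]
  have clm2 : ∀ n : ℕ, exp ((n:ℚ_[p]) • c) = (exp c)^n := by
    intro n
    induction n with
    | zero => simp
    | succ n ih =>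
      have hmem1 : (n:ℚ_[p]) • c ∈ Metric.eball (0:K) (expSeries ℚ_[p] K).radius := by
        apply padic_mem_expBall p
        rw [norm_smul]
        exact lt_of_le_of_lt (mul_le_of_le_one_left (norm_nonneg c) (hnatnorm n)) hc_norm
      have hmem2 : c ∈ Metric.eball (0:K) (expSeries ℚ_[p] K).radius :=
        padic_mem_expBall p hc_norm
      have hsplit : ((n+1:ℕ):ℚ_[p]) • c = (n:ℚ_[p]) • c + c := by
        push_cast
        rw [add_smul, one_smul]
      rw [hsplit, exp_add_of_mem_ball hmem1 hmem2, ih, pow_succ]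
  -- equality of the two functions by density
  have hF : (fun a : ℤ_[p] => σ (exp ((a:ℚ_[p]) * s₀))) =
      (fun a : ℤ_[p] => exp ((a:ℚ_[p]) • c)) := by
    apply PadicInt.denseRange_natCast.equalizer hF₁ hF₂
    funext n
    show σ (exp (((n:ℤ_[p]):ℚ_[p]) * s₀)) = exp (((n:ℤ_[p]):ℚ_[p]) • c)
    have hcast : ((n:ℤ_[p]):ℚ_[p]) = (n:ℚ_[p]) := by push_cast; ring
    rw [hcast, clm1 n, clm2 n, hc_exp]
  -- the explicit formula on the small ball
  have hform : ∀ s : ℚ_[p], ‖s‖ ≤ ε → σ (exp s) = exp ((s * s₀⁻¹) • c) := by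
    intro s hs
    have hsa : ‖s * s₀⁻¹‖ ≤ 1 := by
      rw [norm_mul, norm_inv, hs₀norm, ← div_eq_mul_inv]
      exact div_le_one_of_le₀ hs hεpos.le
    have h := congrFun hF (⟨s * s₀⁻¹, hsa⟩ : ℤ_[p])
    have hcoe : ((⟨s * s₀⁻¹, hsa⟩ : ℤ_[p]) : ℚ_[p]) = s * s₀⁻¹ := rfl
    rw [hcoe, show (s * s₀⁻¹) * s₀ = s by field_simp] at h
    exact h
  -- assemble the analytic function
  have hφa : AnalyticAt ℚ_[p] (fun x : ℚ_[p] => exp ((LQ x * s₀⁻¹) • c)) 1 := by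
    have h1 : AnalyticAt ℚ_[p] (fun x => LQ x * s₀⁻¹) 1 := hLQa.mul analyticAt_const
    have h2 : AnalyticAt ℚ_[p] (fun t : ℚ_[p] => t • c) (LQ 1 * s₀⁻¹) :=
      (ContinuousLinearMap.toSpanSingleton ℚ_[p] c).analyticAt _
    have h3 : AnalyticAt ℚ_[p] (exp : K → K) ((LQ 1 * s₀⁻¹) • c) := by
      rw [hLQ1, zero_mul, zero_smul]
      exact analyticAt_exp_of_mem_ball 0 (Metric.mem_eball_self hradK)
    have h23 : AnalyticAt ℚ_[p] ((exp : K → K) ∘ fun t : ℚ_[p] => t • c)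
        (LQ 1 * s₀⁻¹) := h3.comp_of_eq h2 rfl
    exact h23.comp_of_eq h1 rfl
  -- eventual equality
  have hev1 : ∀ᶠ x : ℚ_[p] in nhds 1, ‖LQ x‖ ≤ ε := by
    have hc : Tendsto LQ (nhds 1) (nhds 0) := by
      rw [← hLQ1]; exact hLQa.continuousAt
    have := hc.eventually
      (eventually_mem_set.mpr (Metric.closedBall_mem_nhds (0:ℚ_[p]) hεpos))
    filter_upwards [this] with x hx
    rwa [Metric.mem_closedBall, _root_.dist_zero_right] at hx
  have heq : σ =ᶠ[nhds (1:ℚ_[p])] fun x => exp ((LQ x * s₀⁻¹) • c) := by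
    filter_upwards [hev1, hLQr] with x h1x h2x
    calc σ x = σ (exp (LQ x)) := by rw [h2x]
      _ = exp ((LQ x * s₀⁻¹) • c) := hform _ h1x
  exact hφa.congr heq.symm
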